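/- Let γ : [0,1] → ℂ be continuous and not constant on any nondegenerate subinterval of [0,1]. Suppose there exist A > 0 and r ≥ 1 such that for every δ ∈ (0,1] there exist a natural number N ≤ A·δ^{−r} and points 0 = t₀ ≤ t₁ ≤ … ≤ t_N = 1 with diam(γ([t_{j−1}, t_j])) ≤ δ for every j ∈ {1,…,N}. Then for every r' > r there exist an increasing homeomorphism τ : [0,1] → [0,1] and a constant C < ∞ such that |γ(τ⁻¹(u)) − γ(τ⁻¹(v))| ≤ C·|u − v|^{1/r'} for all u, v ∈ [0,1]. -/

import Mathlib

open Set Metric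

lemma chain_mono {f : ℕ → ℝ} {N : ℕ} (h : ∀ j < N, f j ≤ f (j+1)) :
    ∀ a b : ℕ, a ≤ b → b ≤ N → f a ≤ f b := by
  intro a b hab hbN
  induction b with
  | zero => simp [Nat.le_zero.mp hab]
  | succ b ih =>
    rcases Nat.lt_or_ge a (b+1) with h1 | h2
    · exact (ih (Nat.lt_succ_iff.mp h1) ((Nat.le_succ b).trans hbN)).trans
        (h b (Nat.lt_of_lt_of_le (Nat.lt_succ_self b) hbN))
    · rw [le_antisymm hab h2]

lemma chain_const {f : ℕ → ℝ} {a : ℕ} :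
    ∀ b : ℕ, (∀ j, a ≤ j → j < b → f j = f (j+1)) → a ≤ b → f a = f b := by
  intro b
  induction b with
  | zero => intro _ hab; simp [Nat.le_zero.mp hab]
  | succ b ih =>
    intro h hab
    rcases Nat.lt_or_ge a (b+1) with h1 | h2
    · have hab' := Nat.lt_succ_iff.mp h1
      rw [ih (fun j hj hj' => h j hj (hj'.trans (Nat.lt_succ_self b))) hab']
      exact h b hab' (Nat.lt_succ_self b)
    · rw [le_antisymm hab h2]

noncomputable def clampAff (a b t : ℝ) : ℝ :=
  if a < b then max 0 (min 1 ((t - a)/(b - a))) else max 0 (min 1 t)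

lemma clampAff_nonneg (a b t : ℝ) : 0 ≤ clampAff a b t := by
  unfold clampAff; split_ifs <;> exact le_max_left _ _

lemma clampAff_le_one (a b t : ℝ) : clampAff a b t ≤ 1 := by
  unfold clampAff; split_ifs <;> exact max_le zero_le_one (min_le_left _ _)

lemma clampAff_continuous (a b : ℝ) : Continuous (clampAff a b) := by
  unfold clampAff; split_ifs <;> fun_prop

lemma clampAff_monotone (a b : ℝ) : Monotone (clampAff a b) := by
  unfold clampAff
  split_ifs with h
  · have hba : 0 < b - a := sub_pos.mpr h
    intro s t hst
    exact max_le_max le_rfl (min_le_min le_rfl ((div_le_div_iff_of_pos_right hba).mpr (by linarith)))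
  · intro s t hst
    exact max_le_max le_rfl (min_le_min le_rfl hst)

lemma clampAff_zero {a : ℝ} (b : ℝ) (ha : 0 ≤ a) : clampAff a b 0 = 0 := by
  unfold clampAff
  split_ifs with h
  · have hba : 0 < b - a := sub_pos.mpr h
    have : (0 - a)/(b - a) ≤ 0 := div_nonpos_of_nonpos_of_nonneg (by linarith) hba.le
    have : min 1 ((0 - a)/(b - a)) ≤ 0 := (min_le_right _ _).trans this
    exact max_eq_left this
  · simp

lemma clampAff_one {b : ℝ} (a : ℝ) (hb : b ≤ 1) : clampAff a b 1 = 1 := by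
  unfold clampAff
  split_ifs with h
  · have hba : 0 < b - a := sub_pos.mpr h
    have h1 : (1 : ℝ) ≤ (1 - a)/(b - a) := (le_div_iff₀ hba).mpr (by linarith)
    rw [min_eq_left h1]
    exact max_eq_right zero_le_one
  · simp

lemma clampAff_eq_zero {a b t : ℝ} (h : a < b) (ht : t ≤ a) : clampAff a b t = 0 := by
  unfold clampAff
  rw [if_pos h]
  have hba : 0 < b - a := sub_pos.mpr h
  have h2 : (t - a)/(b - a) ≤ 0 := div_nonpos_of_nonpos_of_nonneg (by linarith) hba.le
  exact max_eq_left ((min_le_right _ _).trans h2)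

lemma clampAff_eq_one {a b t : ℝ} (h : a < b) (ht : b ≤ t) : clampAff a b t = 1 := by
  unfold clampAff
  rw [if_pos h]
  have hba : 0 < b - a := sub_pos.mpr h
  have h1 : (1 : ℝ) ≤ (t - a)/(b - a) := (le_div_iff₀ hba).mpr (by linarith)
  rw [min_eq_left h1]
  exact max_eq_right zero_le_one

noncomputable def tauN (pts : ℕ → ℝ) (N : ℕ) (t : ℝ) : ℝ :=
  (∑ j ∈ Finset.range N, clampAff (pts j) (pts (j+1)) t) / N

lemma tauN_nonneg (pts : ℕ → ℝ) (N : ℕ) (t : ℝ) : 0 ≤ tauN pts N t :=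
  div_nonneg (Finset.sum_nonneg fun j _ => clampAff_nonneg _ _ _) (Nat.cast_nonneg N)

lemma tauN_le_one (pts : ℕ → ℝ) (N : ℕ) (t : ℝ) : tauN pts N t ≤ 1 := by
  rcases Nat.eq_zero_or_pos N with h | h
  · simp [tauN, h]
  · have : (∑ j ∈ Finset.range N, clampAff (pts j) (pts (j+1)) t) ≤ N := by
      calc (∑ j ∈ Finset.range N, clampAff (pts j) (pts (j+1)) t)
          ≤ ∑ j ∈ Finset.range N, 1 := Finset.sum_le_sum fun j _ => clampAff_le_one _ _ _
        _ = N := by simp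
    exact div_le_one_of_le₀ this (Nat.cast_nonneg N)

lemma tauN_continuous (pts : ℕ → ℝ) (N : ℕ) : Continuous (tauN pts N) := by
  unfold tauN
  exact (continuous_finset_sum _ fun j _ => clampAff_continuous _ _).div_const _

lemma tauN_monotone (pts : ℕ → ℝ) (N : ℕ) : Monotone (tauN pts N) := by
  intro s t hst
  unfold tauN
  rw [div_eq_mul_inv, div_eq_mul_inv]
  exact mul_le_mul_of_nonneg_right
    (Finset.sum_le_sum fun j _ => clampAff_monotone _ _ hst) (by positivity)

lemma tauN_zero {pts : ℕ → ℝ} {N : ℕ} (h0 : ∀ j ≤ N, 0 ≤ pts j) : tauN pts N 0 = 0 := by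
  unfold tauN
  rw [Finset.sum_congr rfl fun j hj => clampAff_zero (pts (j+1)) (h0 j (Finset.mem_range.mp hj).le)]
  simp

lemma tauN_one {pts : ℕ → ℝ} {N : ℕ} (hN : 0 < N) (h1 : ∀ j ≤ N, pts j ≤ 1) :
    tauN pts N 1 = 1 := by
  unfold tauN
  rw [Finset.sum_congr rfl fun j hj => clampAff_one (pts j) (h1 (j+1) (Finset.mem_range.mp hj))]
  simp
  omega

lemma tauN_gap {γ : ℝ → ℂ} {pts : ℕ → ℝ} {N : ℕ} {δ s u : ℝ}
    (hN : 0 < N) (hp0 : pts 0 = 0) (hpN : pts N = 1)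
    (hmono : ∀ j < N, pts j ≤ pts (j+1))
    (hdiam : ∀ j < N, ∀ x ∈ Icc (pts j) (pts (j+1)), ∀ y ∈ Icc (pts j) (pts (j+1)),
      ‖γ x - γ y‖ ≤ δ)
    (hs : s ∈ Icc (0:ℝ) 1) (hu : u ∈ Icc (0:ℝ) 1) (hsu : s ≤ u)
    (hd : 2 * δ < ‖γ s - γ u‖) :
    1 / (N : ℝ) ≤ tauN pts N u - tauN pts N s := by
  have chain : ∀ a b : ℕ, a ≤ b → b ≤ N → pts a ≤ pts b := chain_mono hmono
  have hδ0 : 0 ≤ δ := by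
    have := hdiam 0 hN (pts 0) ⟨le_refl _, hmono 0 hN⟩ (pts 0) ⟨le_refl _, hmono 0 hN⟩
    simpa using this.trans' (by positivity)
  have hslt : s < u := by
    rcases lt_or_eq_of_le hsu with h | h
    · exact h
    · exfalso; rw [h] at hd; simp at hd; linarith
  -- the index i of the piece containing s
  set P : ℕ → Prop := fun j => pts j ≤ s with hP
  have hP0 : P 0 := by simp [hP, hp0, hs.1]
  set i := Nat.findGreatest P N with hi
  have hiN : i ≤ N := Nat.findGreatest_le N
  have hi_le : pts i ≤ s := Nat.findGreatest_spec (Nat.zero_le N) hP0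
  have hiltN : i < N := by
    rcases lt_or_eq_of_le hiN with h | h
    · exact h
    · exfalso; rw [h] at hi_le; rw [hpN] at hi_le
      have : u ≤ 1 := hu.2
      linarith
  have hs_lt : s < pts (i+1) := by
    have := Nat.findGreatest_is_greatest (Nat.lt_succ_self i) (Nat.succ_le_of_lt hiltN)
    exact lt_of_not_ge this
  -- the index k of the piece containing u
  have hk_ex : ∃ j, u ≤ pts (j+1) := by
    refine ⟨N - 1, ?_⟩
    rw [Nat.sub_add_cancel hN, hpN]; exact hu.2
  set k := Nat.find hk_ex with hk
  have hku : u ≤ pts (k+1) := Nat.find_spec hk_ex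
  have hkN : k < N := by
    have h1 : k ≤ N - 1 := Nat.find_le (by rw [Nat.sub_add_cancel hN, hpN]; exact hu.2)
    omega
  have hpk : pts k ≤ u := by
    rcases Nat.eq_zero_or_pos k with h | h
    · rw [h, hp0]; exact hs.1.trans hsu
    · have := Nat.find_min hk_ex (Nat.pred_lt_self h)
      rw [← Nat.succ_pred_eq_of_pos h]
      exact (lt_of_not_ge this).le
  -- find a nondegenerate piece inside [s, u]
  have key : ∃ j < N, s ≤ pts j ∧ pts j < pts (j+1) ∧ pts (j+1) ≤ u := by
    rcases le_or_gt k i with hik | hik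
    · exfalso
      have h1 : pts k ≤ s := (chain k i hik hiN).trans hi_le
      have h2 := hdiam k hkN s ⟨h1, hsu.trans hku⟩ u ⟨h1.trans hsu, hku⟩
      linarith
    · by_cases hcon : pts (i+1) = pts k
      · exfalso
        have h1 : ‖γ s - γ (pts (i+1))‖ ≤ δ :=
          hdiam i hiltN s ⟨hi_le, hs_lt.le⟩ (pts (i+1)) ⟨hmono i hiltN, le_refl _⟩
        have h2 : ‖γ (pts (i+1)) - γ u‖ ≤ δ := by
          rw [hcon]
          exact hdiam k hkN (pts k) ⟨le_refl _, hmono k hkN⟩ u ⟨hpk, hku⟩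
        have := norm_sub_le_norm_sub_add_norm_sub (γ s) (γ (pts (i+1))) (γ u)
        linarith
      · by_contra hno
        push_neg at hno
        apply hcon
        apply chain_const k _ hik
        intro j hj1 hj2
        have hjN : j < N := hj2.trans hkN
        refine le_antisymm (hmono j hjN) (le_of_not_gt ?_)
        intro hlt
        have h1 : s ≤ pts j := hs_lt.le.trans (chain (i+1) j hj1 hjN.le)
        have h2 : pts (j+1) ≤ u := (chain (j+1) k hj2 hkN.le).trans hpk
        exact absurd h2 (not_le.mpr (hno j hjN h1 hlt))
  obtain ⟨j, hjN, hsj, hjnd, hju⟩ := key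
  -- conclude
  have hsum : (1 : ℝ) ≤ ∑ m ∈ Finset.range N,
      (clampAff (pts m) (pts (m+1)) u - clampAff (pts m) (pts (m+1)) s) := by
    have hterm : clampAff (pts j) (pts (j+1)) u - clampAff (pts j) (pts (j+1)) s = 1 := by
      rw [clampAff_eq_one hjnd hju, clampAff_eq_zero hjnd hsj]; ring
    calc (1:ℝ) = clampAff (pts j) (pts (j+1)) u - clampAff (pts j) (pts (j+1)) s := hterm.symm
      _ ≤ _ := Finset.single_le_sum (f := fun m =>
            clampAff (pts m) (pts (m+1)) u - clampAff (pts m) (pts (m+1)) s)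
          (fun m _ => sub_nonneg.mpr (clampAff_monotone _ _ hsu)) (Finset.mem_range.mpr hjN)
  have hNpos : (0:ℝ) < N := Nat.cast_pos.mpr hN
  unfold tauN
  rw [div_sub_div_same, ← Finset.sum_sub_distrib]
  gcongr


/-- If a nondegenerate curve `γ` can, for every `δ ∈ (0,1]`, be split into at most `A·δ^{−r}`
consecutive segments of diameter at most `δ`, then for every `r' > r` it admits an increasing
reparametrization that is Hölder continuous with exponent `1/r'`. -/
theorem holder_reparametrization_of_segment_covering
    (γ : ℝ → ℂ) (hγ : ContinuousOn γ (Icc (0 : ℝ) 1))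
    (hnc : ∀ a b : ℝ, 0 ≤ a → a < b → b ≤ 1 → ∃ s ∈ Icc a b, γ s ≠ γ a)
    (A r : ℝ) (hA : 0 < A) (hr : 1 ≤ r)
    (hcov : ∀ δ : ℝ, δ ∈ Ioc (0 : ℝ) 1 → ∃ N : ℕ, (N : ℝ) ≤ A * δ ^ (-r) ∧
      ∃ pts : ℕ → ℝ, pts 0 = 0 ∧ pts N = 1 ∧
        (∀ j < N, pts j ≤ pts (j + 1)) ∧
        ∀ j < N, Metric.diam (γ '' Icc (pts j) (pts (j + 1))) ≤ δ) :
    ∀ r' : ℝ, r < r' →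
      ∃ τ : ℝ → ℝ, ∃ C : ℝ,
        ContinuousOn τ (Icc (0 : ℝ) 1) ∧ StrictMonoOn τ (Icc (0 : ℝ) 1) ∧
        τ 0 = 0 ∧ τ 1 = 1 ∧
        ∀ s ∈ Icc (0 : ℝ) 1, ∀ u ∈ Icc (0 : ℝ) 1,
          ‖γ s - γ u‖ ≤ C * |τ s - τ u| ^ (1 / r') := by
  intro r' hr'
  have hr'0 : 0 < r' := by linarith
  -- the covering at scale (1/2)^(n+1)
  have hδmem : ∀ n : ℕ, ((1/2:ℝ)^(n+1)) ∈ Ioc (0:ℝ) 1 := by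
    intro n
    constructor
    · positivity
    · exact pow_le_one₀ (by norm_num) (by norm_num)
  choose N hNle pts hp0 hpN hmono hdiam using fun n : ℕ => hcov ((1/2)^(n+1)) (hδmem n)
  have hNpos : ∀ n, 0 < N n := by
    intro n
    rcases Nat.eq_zero_or_pos (N n) with h | h
    · exfalso; have := hpN n; rw [h, hp0 n] at this; norm_num at this
    · exact h
  have hpts0 : ∀ n, ∀ j ≤ N n, 0 ≤ pts n j := by
    intro n j hj
    have := chain_mono (hmono n) 0 j (Nat.zero_le j) hj
    rwa [hp0 n] at this
  have hpts1 : ∀ n, ∀ j ≤ N n, pts n j ≤ 1 := by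
    intro n j hj
    have := chain_mono (hmono n) j (N n) hj (le_refl _)
    rwa [hpN n] at this
  -- pointwise version of the diameter bound
  have hpair : ∀ n, ∀ j < N n, ∀ x ∈ Icc (pts n j) (pts n (j+1)),
      ∀ y ∈ Icc (pts n j) (pts n (j+1)), ‖γ x - γ y‖ ≤ (1/2:ℝ)^(n+1) := by
    intro n j hj x hx y hy
    have hsub : Icc (pts n j) (pts n (j+1)) ⊆ Icc (0:ℝ) 1 :=
      Icc_subset_Icc (hpts0 n j hj.le) (hpts1 n (j+1) hj)
    have hb : Bornology.IsBounded (γ '' Icc (pts n j) (pts n (j+1))) :=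
      (isCompact_Icc.image_of_continuousOn (hγ.mono hsub)).isBounded
    have := Metric.dist_le_diam_of_mem hb (mem_image_of_mem γ hx) (mem_image_of_mem γ hy)
    rw [Complex.dist_eq] at this
    exact this.trans (hdiam n j hj)
  -- geometric weights
  set ε : ℝ := r' - r with hε
  have hεpos : 0 < ε := by simp [hε]; linarith
  set θ : ℝ := (2:ℝ) ^ (-ε) with hθ
  have hθ0 : 0 < θ := Real.rpow_pos_of_pos two_pos _
  have hθ1 : θ < 1 := by
    rw [hθ]
    exact Real.rpow_lt_one_of_one_lt_of_neg one_lt_two (by linarith)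
  set c : ℕ → ℝ := fun n => (1-θ) * θ^n with hc
  have hcpos : ∀ n, 0 < c n := fun n => mul_pos (by linarith) (pow_pos hθ0 n)
  have hcsum : Summable c := (summable_geometric_of_lt_one hθ0.le hθ1).mul_left _
  have hctsum : ∑' n, c n = 1 := by
    rw [hc, tsum_mul_left, tsum_geometric_of_lt_one hθ0.le hθ1,
      mul_inv_cancel₀ (by linarith : (1:ℝ)-θ ≠ 0)]
  -- the reparametrization
  have hsummand : ∀ t, Summable (fun n => c n * tauN (pts n) (N n) t) := by
    intro t
    refine Summable.of_nonneg_of_le (fun n => ?_) (fun n => ?_) hcsum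
    · exact mul_nonneg (hcpos n).le (tauN_nonneg _ _ _)
    · exact mul_le_of_le_one_right (hcpos n).le (tauN_le_one _ _ _)
  set g : ℝ → ℝ := fun t => ∑' n, c n * tauN (pts n) (N n) t with hg
  have hgcont : Continuous g := by
    refine continuous_tsum (fun n => continuous_const.mul (tauN_continuous _ _)) hcsum ?_
    intro n t
    rw [Real.norm_eq_abs, abs_mul, abs_of_pos (hcpos n),
      abs_of_nonneg (tauN_nonneg _ _ _)]
    exact mul_le_of_le_one_right (hcpos n).le (tauN_le_one _ _ _)
  have hgmono : Monotone g := by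
    intro s t hst
    exact Summable.tsum_le_tsum (fun n => mul_le_mul_of_nonneg_left
      (tauN_monotone _ _ hst) (hcpos n).le) (hsummand s) (hsummand t)
  set τ : ℝ → ℝ := fun t => (t + g t) / 2 with hτ
  have hτmono : StrictMono τ := by
    intro s t hst
    have := hgmono hst.le
    simp only [hτ]
    linarith
  have hτ0 : τ 0 = 0 := by
    have : g 0 = 0 := by
      simp only [hg]
      have : ∀ n, c n * tauN (pts n) (N n) 0 = 0 := by
        intro n
        rw [tauN_zero (fun j hj => hpts0 n j hj)]
        ring
      rw [tsum_congr (fun n => this n)]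
      exact tsum_zero
    simp [hτ, this]
  have hτ1 : τ 1 = 1 := by
    have : g 1 = 1 := by
      simp only [hg]
      have : ∀ n, c n * tauN (pts n) (N n) 1 = c n := by
        intro n
        rw [tauN_one (hNpos n) (fun j hj => hpts1 n j hj)]
        ring
      rw [tsum_congr (fun n => this n), hctsum]
    simp [hτ, this]
  -- the constant
  have hDbdd : Bornology.IsBounded (γ '' Icc (0:ℝ) 1) :=
    (isCompact_Icc.image_of_continuousOn hγ).isBounded
  set D : ℝ := Metric.diam (γ '' Icc (0:ℝ) 1) with hD
  have hD0 : 0 ≤ D := Metric.diam_nonneg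
  have hDle : ∀ s ∈ Icc (0:ℝ) 1, ∀ u ∈ Icc (0:ℝ) 1, ‖γ s - γ u‖ ≤ D := by
    intro s hs u hu
    rw [← Complex.dist_eq]
    exact Metric.dist_le_diam_of_mem hDbdd (mem_image_of_mem γ hs) (mem_image_of_mem γ hu)
  set K : ℝ := (1-θ) / (A * (2:ℝ)^(r+1)) with hK
  have hKpos : 0 < K := by
    apply div_pos (by linarith)
    exact mul_pos hA (Real.rpow_pos_of_pos two_pos _)
  set C : ℝ := (D + 2) / K ^ (1/r') with hC
  refine ⟨τ, C, ((continuous_id.add hgcont).div_const 2).continuousOn,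
    fun s _ t _ hst => hτmono hst, hτ0, hτ1, ?_⟩
  -- main Hölder estimate, first for s ≤ u
  have key : ∀ s ∈ Icc (0:ℝ) 1, ∀ u ∈ Icc (0:ℝ) 1, s ≤ u →
      ‖γ s - γ u‖ ≤ C * (τ u - τ s) ^ (1 / r') := by
    intro s hs u hu hsu
    set d : ℝ := ‖γ s - γ u‖ with hd
    have hΔ0 : 0 ≤ τ u - τ s := sub_nonneg.mpr (hτmono.monotone hsu)
    have hC0 : 0 ≤ C := div_nonneg (by linarith) (Real.rpow_nonneg hKpos.le _)
    rcases eq_or_lt_of_le (norm_nonneg (γ s - γ u)) with hd0 | hdpos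
    · rw [show d = 0 from by rw [hd, ← hd0]]
      exact mul_nonneg hC0 (Real.rpow_nonneg hΔ0 _)
    · -- choose the scale
      have hfind : ∃ n : ℕ, 2 * (1/2:ℝ)^(n+1) < d := by
        obtain ⟨n, hn⟩ := exists_pow_lt_of_lt_one (half_pos hdpos) (by norm_num : (1/2:ℝ) < 1)
        exact ⟨n, by rw [pow_succ]; linarith⟩
      set n := Nat.find hfind with hn
      have hn_spec : 2 * (1/2:ℝ)^(n+1) < d := Nat.find_spec hfind
      -- gap at level n
      have hgap : 1 / (N n : ℝ) ≤ tauN (pts n) (N n) u - tauN (pts n) (N n) s :=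
        tauN_gap (hNpos n) (hp0 n) (hpN n) (hmono n) (hpair n) hs hu hsu hn_spec
      -- lower bound on τ u - τ s
      have hglow : c n * (1 / (N n : ℝ)) ≤ g u - g s := by
        rw [hg, ← Summable.tsum_sub (hsummand u) (hsummand s)]
        have h1 : c n * (1/(N n : ℝ)) ≤
            c n * tauN (pts n) (N n) u - c n * tauN (pts n) (N n) s := by
          rw [← mul_sub]
          exact mul_le_mul_of_nonneg_left hgap (hcpos n).le
        refine h1.trans ?_
        exact Summable.le_tsum (f := fun m => c m * tauN (pts m) (N m) u - c m * tauN (pts m) (N m) s)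
          ((hsummand u).sub (hsummand s)) n fun m _ => sub_nonneg.mpr
          (mul_le_mul_of_nonneg_left (tauN_monotone _ _ hsu) (hcpos m).le)
      have hΔlow : c n * (1 / (N n : ℝ)) / 2 ≤ τ u - τ s := by
        simp only [hτ]
        have hsu' : 0 ≤ u - s := sub_nonneg.mpr hsu
        linarith
      -- convert to powers of 2
      have hNle' : (N n : ℝ) ≤ A * (2:ℝ) ^ (((n:ℝ)+1) * r) := by
        have := hNle n
        have he : ((1/2:ℝ)^(n+1) : ℝ) ^ (-r) = (2:ℝ) ^ (((n:ℝ)+1) * r) := by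
          have h1 : ((1/2:ℝ)^(n+1) : ℝ) = (2:ℝ) ^ (-(((n:ℝ)+1))) := by
            rw [Real.rpow_neg two_pos.le, show ((n:ℝ)+1) = ((n+1 : ℕ):ℝ) by push_cast; ring,
              Real.rpow_natCast, one_div, inv_pow]
          rw [h1, ← Real.rpow_mul two_pos.le]
          ring_nf
        rwa [he] at this
      have hNinv : (1:ℝ) / (A * (2:ℝ) ^ (((n:ℝ)+1) * r)) ≤ 1 / (N n : ℝ) := by
        apply one_div_le_one_div_of_le (Nat.cast_pos.mpr (hNpos n)) hNle'
      have hθn : θ ^ n = (2:ℝ) ^ (-(ε * n)) := by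
        rw [hθ, ← Real.rpow_natCast ((2:ℝ)^(-ε)) n, ← Real.rpow_mul two_pos.le]
        ring_nf
      -- Δτ ≥ K * 2^(-n r')
      have e2 : (2:ℝ)^(-(ε*(n:ℝ))) = (2:ℝ)^(-((n:ℝ)*r')) * (2:ℝ)^((n:ℝ)*r) := by
        rw [← Real.rpow_add two_pos]; congr 1; rw [hε]; ring
      have e3 : (2:ℝ)^(((n:ℝ)+1)*r) = (2:ℝ)^((n:ℝ)*r) * (2:ℝ)^r := by
        rw [← Real.rpow_add two_pos]; congr 1; ring
      have e4 : (2:ℝ)^(r+1) = (2:ℝ)^r * 2 := by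
        rw [Real.rpow_add two_pos, Real.rpow_one]
      have e1 : (1-θ) * θ^n * (1 / (A * (2:ℝ)^(((n:ℝ)+1)*r))) / 2 =
          K * (2:ℝ)^(-((n:ℝ)*r')) := by
        rw [hθn, e2, e3, hK, e4]
        have h2r : (0:ℝ) < (2:ℝ)^r := Real.rpow_pos_of_pos two_pos _
        have h2nr : (0:ℝ) < (2:ℝ)^((n:ℝ)*r) := Real.rpow_pos_of_pos two_pos _
        field_simp
      have hΔK : K * (2:ℝ) ^ (-((n:ℝ) * r')) ≤ τ u - τ s := by
        refine le_trans ?_ hΔlow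
        rw [← e1]
        have hθn0 : (0:ℝ) ≤ (1-θ) * θ^n := mul_nonneg (by linarith) (pow_pos hθ0 n).le
        have := mul_le_mul_of_nonneg_left hNinv hθn0
        simp only [hc]
        linarith
      -- the claimed bound, in the form d ≤ (D+2) * ((τ u - τ s)/K)^(1/r')
      have hform : C * (τ u - τ s)^(1/r') = (D+2) * ((τ u - τ s)/K)^(1/r') := by
        rw [hC, Real.div_rpow hΔ0 hKpos.le]
        have hKp : (0:ℝ) < K^(1/r') := Real.rpow_pos_of_pos hKpos _
        field_simp
      rw [hform]
      have hX0 : (0:ℝ) ≤ ((τ u - τ s)/K)^(1/r') := Real.rpow_nonneg (by positivity) _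
      rcases Nat.eq_zero_or_pos n with hn0 | hnpos
      · -- large scale: d ≤ D and (τu - τs)/K ≥ 1
        have hΔK' : K ≤ τ u - τ s := by
          have : (2:ℝ) ^ (-((n:ℝ) * r')) = 1 := by rw [hn0]; norm_num
          rw [this, mul_one] at hΔK; exact hΔK
        have h1 : (1:ℝ) ≤ ((τ u - τ s)/K)^(1/r') := by
          have hx : (1:ℝ) ≤ (τ u - τ s)/K := (one_le_div hKpos).mpr hΔK'
          calc (1:ℝ) = (1:ℝ)^(1/r') := (Real.one_rpow _).symm
            _ ≤ _ := Real.rpow_le_rpow zero_le_one hx (by positivity)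
        have hdD : d ≤ D := hDle s hs u hu
        have h2 := mul_le_mul_of_nonneg_left h1 (by linarith : (0:ℝ) ≤ D+2)
        linarith
      · -- small scale: d ≤ 2 * (1/2)^n
        have hmin : ¬ (2 * (1/2:ℝ)^((n-1)+1) < d) := Nat.find_min hfind (Nat.sub_lt hnpos one_pos)
        rw [Nat.sub_add_cancel hnpos] at hmin
        push_neg at hmin
        have hpow : ((1/2:ℝ)^n : ℝ) = (2:ℝ) ^ (-(n:ℝ)) := by
          rw [Real.rpow_neg two_pos.le, Real.rpow_natCast, one_div, inv_pow]
        have hd2 : d/2 ≤ (2:ℝ)^(-(n:ℝ)) := by rw [← hpow]; linarith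
        have h2 : (d/2) ^ r' ≤ (2:ℝ)^(-((n:ℝ)*r')) := by
          have := Real.rpow_le_rpow (by positivity) hd2 hr'0.le
          rwa [← Real.rpow_mul two_pos.le, show -(n:ℝ)*r' = -((n:ℝ)*r') by ring] at this
        have h3 : (d/2) ^ r' ≤ (τ u - τ s)/K := by
          rw [le_div_iff₀ hKpos]
          calc (d/2)^r' * K = K * (d/2)^r' := by ring
            _ ≤ K * (2:ℝ)^(-((n:ℝ)*r')) := mul_le_mul_of_nonneg_left h2 hKpos.le
            _ ≤ τ u - τ s := hΔK
        have h4 : d/2 ≤ ((τ u - τ s)/K)^(1/r') := by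
          have := Real.rpow_le_rpow (Real.rpow_nonneg (by positivity) _) h3 (by positivity : (0:ℝ) ≤ 1/r')
          rw [one_div, Real.rpow_rpow_inv (by positivity) (by positivity)] at this
          rwa [one_div]
        have h5 := mul_le_mul_of_nonneg_right (show (2:ℝ) ≤ D+2 by linarith) hX0
        linarith
  intro s hs u hu
  rcases le_total s u with h | h
  · have := key s hs u hu h
    rwa [abs_sub_comm, abs_of_nonneg (sub_nonneg.mpr (hτmono.monotone h))]
  · have := key u hu s hs h
    rw [norm_sub_rev] at this
    rwa [abs_of_nonneg (sub_nonneg.mpr (hτmono.monotone h))]
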